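/- Let ω > 0, c ≠ 0, a₁, b₁, d₁, e₁ real, η = 3ce₁ + 2√3·d₁√(c² + ω²). The averaged system f₁(r,Z,W) = r(6c²(e₁ - W) - 3a₁ω² + 4√3·c·d₁√(c²+ω²))/(6ω³), f₂(r,Z,W) = -2cZ(3c(e₁-W) + 2√3·d₁√(c²+ω²))/(3ω³), f₃(r,Z,W) = (12c⁴Z² + 2c²r²ω² - 3b₁Wω⁴)/(3ω⁵) has exactly five zeros: s₀ = (0,0,0); s₁,₂ = (0, ∓√(b₁ω⁴η)/(2√3·c^{5/2}), e₁ + 2d₁√(c²+ω²)/(√3·c)); and s₃,₄ = (∓√(b₁ω²(6c²e₁ - 3a₁ω² + 4√3·c·d₁√(c²+ω²)))/(2c²), 0, e₁ + (-3a₁ω² + 4√3·c·d₁√(c²+ω²))/(6c²)), whenever the expressions under the square roots are nonnegative. -/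

import Mathlib

set_option maxHeartbeats 1000000

/-- The averaged system from the zero-Hopf bifurcation of the Lorenz–Haken system at the
origin has exactly the five zeros `s₀, s₁, s₂, s₃, s₄`. -/
theorem averaged_system_origin_five_zeros
    (ω c a₁ b₁ d₁ e₁ : ℝ) (hω : 0 < ω) (hc : 0 < c) (ha₁ : a₁ ≠ 0) (hb₁ : b₁ ≠ 0)
    (hη : b₁ * (3 * c * e₁ + 2 * Real.sqrt 3 * d₁ * Real.sqrt (c ^ 2 + ω ^ 2)) ≥ 0)
    (hη0 : 3 * c * e₁ + 2 * Real.sqrt 3 * d₁ * Real.sqrt (c ^ 2 + ω ^ 2) ≠ 0)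
    (hμ : b₁ * (6 * c ^ 2 * e₁ - 3 * a₁ * ω ^ 2
          + 4 * Real.sqrt 3 * c * d₁ * Real.sqrt (c ^ 2 + ω ^ 2)) ≥ 0)
    (hη1 : 3 * a₁ * ω ^ 2
          - 2 * c * (3 * c * e₁ + 2 * Real.sqrt 3 * d₁ * Real.sqrt (c ^ 2 + ω ^ 2)) ≠ 0)
    (r Z W : ℝ) :
    (r * (6 * c ^ 2 * (e₁ - W) - 3 * a₁ * ω ^ 2
        + 4 * Real.sqrt 3 * c * d₁ * Real.sqrt (c ^ 2 + ω ^ 2)) / (6 * ω ^ 3) = 0 ∧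
     -(2 * c * Z * (3 * c * (e₁ - W)
        + 2 * Real.sqrt 3 * d₁ * Real.sqrt (c ^ 2 + ω ^ 2))) / (3 * ω ^ 3) = 0 ∧
     (12 * c ^ 4 * Z ^ 2 + 2 * c ^ 2 * r ^ 2 * ω ^ 2 - 3 * b₁ * W * ω ^ 4)
        / (3 * ω ^ 5) = 0) ↔
    ((r = 0 ∧ Z = 0 ∧ W = 0) ∨
     (r = 0 ∧
      Z = -(Real.sqrt (b₁ * ω ^ 4 * (3 * c * e₁
            + 2 * Real.sqrt 3 * d₁ * Real.sqrt (c ^ 2 + ω ^ 2)))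
          / (2 * Real.sqrt 3 * (c ^ 2 * Real.sqrt c))) ∧
      W = e₁ + 2 * d₁ * Real.sqrt (c ^ 2 + ω ^ 2) / (Real.sqrt 3 * c)) ∨
     (r = 0 ∧
      Z = Real.sqrt (b₁ * ω ^ 4 * (3 * c * e₁
            + 2 * Real.sqrt 3 * d₁ * Real.sqrt (c ^ 2 + ω ^ 2)))
          / (2 * Real.sqrt 3 * (c ^ 2 * Real.sqrt c)) ∧
      W = e₁ + 2 * d₁ * Real.sqrt (c ^ 2 + ω ^ 2) / (Real.sqrt 3 * c)) ∨
     (r = -(Real.sqrt (b₁ * ω ^ 2 * (6 * c ^ 2 * e₁ - 3 * a₁ * ω ^ 2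
            + 4 * Real.sqrt 3 * c * d₁ * Real.sqrt (c ^ 2 + ω ^ 2))) / (2 * c ^ 2)) ∧
      Z = 0 ∧
      W = e₁ + (-3 * a₁ * ω ^ 2
            + 4 * Real.sqrt 3 * c * d₁ * Real.sqrt (c ^ 2 + ω ^ 2)) / (6 * c ^ 2)) ∨
     (r = Real.sqrt (b₁ * ω ^ 2 * (6 * c ^ 2 * e₁ - 3 * a₁ * ω ^ 2
            + 4 * Real.sqrt 3 * c * d₁ * Real.sqrt (c ^ 2 + ω ^ 2))) / (2 * c ^ 2) ∧
      Z = 0 ∧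
      W = e₁ + (-3 * a₁ * ω ^ 2
            + 4 * Real.sqrt 3 * c * d₁ * Real.sqrt (c ^ 2 + ω ^ 2)) / (6 * c ^ 2))) := by
  have hc0 : c ≠ 0 := ne_of_gt hc
  have hω0 : ω ≠ 0 := ne_of_gt hω
  set S := Real.sqrt (c ^ 2 + ω ^ 2) with hSd
  set Q := Real.sqrt 3 with hQd
  have hQ2 : Q ^ 2 = 3 := Real.sq_sqrt (by norm_num)
  have hQ0 : 0 < Q := Real.sqrt_pos.mpr (by norm_num)
  have hsc : Real.sqrt c ^ 2 = c := Real.sq_sqrt hc.le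
  have hsc0 : 0 < Real.sqrt c := Real.sqrt_pos.mpr hc
  have hBη : 0 ≤ b₁ * ω ^ 4 * (3 * c * e₁ + 2 * Q * d₁ * S) := by
    nlinarith [pow_nonneg hω.le 4, hη]
  have hBμ : 0 ≤ b₁ * ω ^ 2 * (6 * c ^ 2 * e₁ - 3 * a₁ * ω ^ 2 + 4 * Q * c * d₁ * S) := by
    nlinarith [sq_nonneg ω, hμ]
  set EZ := Real.sqrt (b₁ * ω ^ 4 * (3 * c * e₁ + 2 * Q * d₁ * S))
      / (2 * Q * (c ^ 2 * Real.sqrt c)) with hEZd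
  set ER := Real.sqrt (b₁ * ω ^ 2 * (6 * c ^ 2 * e₁ - 3 * a₁ * ω ^ 2 + 4 * Q * c * d₁ * S))
      / (2 * c ^ 2) with hERd
  have hdenZ : (2 * Q * (c ^ 2 * Real.sqrt c)) ^ 2 = 12 * c ^ 5 := by
    rw [mul_pow, mul_pow, mul_pow, hQ2, hsc]; ring
  have hEZ2 : 12 * c ^ 5 * EZ ^ 2 = b₁ * ω ^ 4 * (3 * c * e₁ + 2 * Q * d₁ * S) := by
    rw [hEZd, div_pow, hdenZ, Real.sq_sqrt hBη]
    field_simp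
  have hER2 : 4 * c ^ 4 * ER ^ 2
      = b₁ * ω ^ 2 * (6 * c ^ 2 * e₁ - 3 * a₁ * ω ^ 2 + 4 * Q * c * d₁ * S) := by
    rw [hERd, div_pow, Real.sq_sqrt hBμ]
    have : (2 * c ^ 2) ^ 2 = 4 * c ^ 4 := by ring
    rw [this]; field_simp
  clear_value EZ ER
  have hd1 : (6 : ℝ) * ω ^ 3 ≠ 0 := by positivity
  have hd2 : (3 : ℝ) * ω ^ 3 ≠ 0 := by positivity
  have hd3 : (3 : ℝ) * ω ^ 5 ≠ 0 := by positivity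
  rw [div_eq_zero_iff, div_eq_zero_iff, div_eq_zero_iff,
      or_iff_left hd1, or_iff_left hd2, or_iff_left hd3]
  constructor
  · rintro ⟨h1, h2, h3⟩
    have h1' : r * (6 * c ^ 2 * e₁ - 3 * a₁ * ω ^ 2 + 4 * Q * c * d₁ * S - 6 * c ^ 2 * W) = 0 := by
      linear_combination h1
    have h2'' : (-(2 * c)) * (Z * (3 * c * e₁ + 2 * Q * d₁ * S - 3 * c * W)) = 0 := by
      linear_combination h2
    have h2' : Z * (3 * c * e₁ + 2 * Q * d₁ * S - 3 * c * W) = 0 := by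
      rcases mul_eq_zero.mp h2'' with h' | h'
      · exact absurd (by linarith : c = 0) hc0
      · exact h'
    rcases mul_eq_zero.mp h1' with hr | hW1 <;> rcases mul_eq_zero.mp h2' with hZ | hW2
    · -- r = 0, Z = 0 ⟹ W = 0
      left
      refine ⟨hr, hZ, ?_⟩
      have hW0 : (3 * b₁ * ω ^ 4) * W = 0 := by
        linear_combination -h3 + (12 * c ^ 4 * Z) * hZ + (2 * c ^ 2 * ω ^ 2 * r) * hr
      rcases mul_eq_zero.mp hW0 with h' | h'
      · exfalso; apply hb₁; nlinarith [pow_pos hω 4]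
      · exact h'
    · -- r = 0, W = η/(3c)
      have hZsq : 12 * c ^ 5 * Z ^ 2 = b₁ * ω ^ 4 * (3 * c * e₁ + 2 * Q * d₁ * S) := by
        linear_combination c * h3 - b₁ * ω ^ 4 * hW2 - 2 * c ^ 3 * ω ^ 2 * r * hr
      have hfac : (Z - EZ) * (Z + EZ) = 0 := by
        have h12 : (12 : ℝ) * c ^ 5 ≠ 0 := by positivity
        apply mul_left_cancel₀ h12
        rw [mul_zero]
        linear_combination hZsq - hEZ2
      have hWv : W = e₁ + 2 * d₁ * S / (Q * c) := by
        have hQc : Q * c ≠ 0 := by positivity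
        field_simp
        linear_combination (-(1/3) * Q) * hW2 + ((2/3) * d₁ * S) * hQ2
      rcases mul_eq_zero.mp hfac with h' | h'
      · right; right; left
        exact ⟨hr, by linarith [sub_eq_zero.mp h'], hWv⟩
      · right; left
        refine ⟨hr, ?_, hWv⟩
        have := add_eq_zero_iff_eq_neg.mp h'
        exact this
    · -- Z = 0, W = μ/(6c²)
      have hrsq : 4 * c ^ 4 * r ^ 2
          = b₁ * ω ^ 2 * (6 * c ^ 2 * e₁ - 3 * a₁ * ω ^ 2 + 4 * Q * c * d₁ * S) := by
        have hmul : ω ^ 2 * (4 * c ^ 4 * r ^ 2)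
            = ω ^ 2 * (b₁ * ω ^ 2 * (6 * c ^ 2 * e₁ - 3 * a₁ * ω ^ 2 + 4 * Q * c * d₁ * S)) := by
          linear_combination 2 * c ^ 2 * h3 - b₁ * ω ^ 4 * hW1 - 24 * c ^ 6 * Z * hZ
        exact mul_left_cancel₀ (pow_ne_zero 2 hω0) hmul
      have hfac : (r - ER) * (r + ER) = 0 := by
        have h4 : (4 : ℝ) * c ^ 4 ≠ 0 := by positivity
        apply mul_left_cancel₀ h4
        rw [mul_zero]
        linear_combination hrsq - hER2
      have hWv : W = e₁ + (-3 * a₁ * ω ^ 2 + 4 * Q * c * d₁ * S) / (6 * c ^ 2) := by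
        field_simp
        linear_combination -hW1
      rcases mul_eq_zero.mp hfac with h' | h'
      · right; right; right; right
        exact ⟨by linarith [sub_eq_zero.mp h'], hZ, hWv⟩
      · right; right; right; left
        exact ⟨add_eq_zero_iff_eq_neg.mp h', hZ, hWv⟩
    · -- both W equations: contradiction with a₁ ≠ 0
      exfalso
      have ha : a₁ * (3 * ω ^ 2) = 0 := by
        linear_combination 2 * c * hW2 - hW1
      rcases mul_eq_zero.mp ha with h' | h'
      · exact ha₁ h'
      · nlinarith [pow_pos hω 2]
  · rintro (⟨hr, hZ, hW⟩ | ⟨hr, hZ, hW⟩ | ⟨hr, hZ, hW⟩ | ⟨hr, hZ, hW⟩ | ⟨hr, hZ, hW⟩) <;>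
      rw [hr, hZ, hW]
    · refine ⟨by ring, by ring, by ring⟩
    · refine ⟨by ring, ?_, ?_⟩
      · have hfact : 3 * c * (e₁ - (e₁ + 2 * d₁ * S / (Q * c))) + 2 * Q * d₁ * S = 0 := by
          field_simp
          linear_combination 2 * d₁ * S * hQ2
        linear_combination (2 * c * EZ) * hfact
      · have hQc : Q * c ≠ 0 := by positivity
        field_simp
        linear_combination Q * hEZ2 + 2 * b₁ * d₁ * S * ω ^ 4 * hQ2
    · refine ⟨by ring, ?_, ?_⟩
      · have hfact : 3 * c * (e₁ - (e₁ + 2 * d₁ * S / (Q * c))) + 2 * Q * d₁ * S = 0 := by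
          field_simp
          linear_combination 2 * d₁ * S * hQ2
        linear_combination (-(2 * c * EZ)) * hfact
      · have hQc : Q * c ≠ 0 := by positivity
        field_simp
        linear_combination Q * hEZ2 + 2 * b₁ * d₁ * S * ω ^ 4 * hQ2
    · refine ⟨?_, by ring, ?_⟩
      · have hfact : 6 * c ^ 2 * (e₁ - (e₁ + (-3 * a₁ * ω ^ 2 + 4 * Q * c * d₁ * S) / (6 * c ^ 2)))
            - 3 * a₁ * ω ^ 2 + 4 * Q * c * d₁ * S = 0 := by
          field_simp
          ring
        linear_combination (-ER) * hfact
      · field_simp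
        linear_combination (3 * ω ^ 2) * hER2
    · refine ⟨?_, by ring, ?_⟩
      · have hfact : 6 * c ^ 2 * (e₁ - (e₁ + (-3 * a₁ * ω ^ 2 + 4 * Q * c * d₁ * S) / (6 * c ^ 2)))
            - 3 * a₁ * ω ^ 2 + 4 * Q * c * d₁ * S = 0 := by
          field_simp
          ring
        linear_combination ER * hfact
      · field_simp
        linear_combination (3 * ω ^ 2) * hER2
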